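/- Let k ≥ 2 be an integer and let G be a connected simple graph that has no spanning tree with at most k leaves. Then t_{k+1} ≥ t_2 + k − 1, where t_2 is the number of vertices of a longest path in G and t_{k+1} is the maximum order of a subgraph of G that is a tree with at most k+1 leaves. -/

import Mathlib

open SimpleGraph

/-- The degree of a vertex: the cardinality of its neighborhood. -/
noncomputable def deg {V : Type*} (G : SimpleGraph V) (x : V) : ℕ :=
  (G.neighborSet x).ncard

/-- The number of leaves (vertices of degree 1) of a subgraph. -/
noncomputable def leafCount {V : Type*} {G : SimpleGraph V} (H : G.Subgraph) : ℕ :=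
  {v : H.verts | (H.coe.neighborSet v).ncard = 1}.ncard

/-- `H` is a tree with at most `k` leaves (a `k`-ended tree). -/
def IsEndedTree {V : Type*} {G : SimpleGraph V} (H : G.Subgraph) (k : ℕ) : Prop :=
  H.coe.IsTree ∧ leafCount H ≤ k

/-- `t_k`: the maximum order of a subgraph of `G` that is a tree with at most `k` leaves. -/
noncomputable def treeOrd {V : Type*} (G : SimpleGraph V) (k : ℕ) : ℕ :=
  sSup {m | ∃ H : G.Subgraph, IsEndedTree H k ∧ H.verts.ncard = m}

/-- The number of vertices of a longest path in `G`. -/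
noncomputable def pathOrd {V : Type*} (G : SimpleGraph V) : ℕ :=
  sSup {m | ∃ (u v : V) (p : G.Walk u v), p.IsPath ∧ p.support.length = m}

/-- `s` is an independent set of vertices of `G`. -/
def IsIndep {V : Type*} (G : SimpleGraph V) (s : Set V) : Prop :=
  s.Pairwise fun a b => ¬ G.Adj a b

/-- `σ₃`: the minimum degree sum over independent triples of vertices. -/
noncomputable def sigma3 {V : Type*} (G : SimpleGraph V) : ℕ :=
  sInf {s | ∃ x y z : V, x ≠ y ∧ x ≠ z ∧ y ≠ z ∧
    ¬G.Adj x y ∧ ¬G.Adj x z ∧ ¬G.Adj y z ∧ s = deg G x + deg G y + deg G z}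

namespace SpanTreeAux

variable {V : Type*} {G : SimpleGraph V}

/-- The homomorphism from `H.coe` to `H.spanningCoe`. -/
def coeToSpanning (H : G.Subgraph) : H.coe →g H.spanningCoe where
  toFun := Subtype.val
  map_rel' := fun h => h

lemma coeToSpanning_injective (H : G.Subgraph) : Function.Injective (coeToSpanning H) :=
  Subtype.val_injective

/-- Lift a walk in the spanning coercion into the coercion. -/
def liftWalk {H : G.Subgraph} : ∀ {u v : V} (p : H.spanningCoe.Walk u v)
    (hu : u ∈ H.verts) (hv : v ∈ H.verts), H.coe.Walk ⟨u, hu⟩ ⟨v, hv⟩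
  | _, _, Walk.nil, _, _ => Walk.nil
  | _, _, Walk.cons h p, hu, hv =>
      Walk.cons (by exact h) (liftWalk p (H.edge_vert (H.adj_symm h)) hv)

lemma liftWalk_map {H : G.Subgraph} {u v : V} (p : H.spanningCoe.Walk u v)
    (hu : u ∈ H.verts) (hv : v ∈ H.verts) :
    (liftWalk p hu hv).map (coeToSpanning H) = p := by
  induction p with
  | nil => rfl
  | cons h p ih => exact congrArg (Walk.cons h) (ih _ hv)

lemma spanning_acyclic_of_coe {H : G.Subgraph} (h : H.coe.IsAcyclic) :
    H.spanningCoe.IsAcyclic := by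
  intro v c hc
  have hv : v ∈ H.verts := by
    cases c with
    | nil => exact absurd rfl hc.ne_nil
    | cons h' p => exact H.edge_vert h'
  have : ((liftWalk c hv hv).map (coeToSpanning H)).IsCycle := by
    rw [liftWalk_map]; exact hc
  exact h _ ((Walk.map_isCycle_iff_of_injective (coeToSpanning_injective H)).mp this)

lemma coe_acyclic_of_spanning {H : G.Subgraph} (h : H.spanningCoe.IsAcyclic) :
    H.coe.IsAcyclic := by
  intro v c hc
  exact h _ (hc.map (coeToSpanning_injective H))

lemma pendant_isAcyclic {W : Type*} {G₁ G₂ : SimpleGraph W} {x w : W} (hxw : x ≠ w)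
    (hac : G₁.IsAcyclic) (hiso : ∀ y, ¬ G₁.Adj w y)
    (hadj : ∀ a b, G₂.Adj a b ↔ G₁.Adj a b ∨ s(a, b) = s(x, w)) : G₂.IsAcyclic := by
  classical
  intro v c hc
  by_cases hw : w ∈ c.support
  · have hc' := hc.rotate hw
    obtain ⟨y, h, q, hq⟩ := Walk.not_nil_iff.mp hc'.not_nil
    rw [hq, Walk.cons_isCycle_iff] at hc'
    -- the first neighbour of w must be x
    have hy : y = x := by
      rcases (hadj w y).mp h with h1 | h2
      · exact absurd h1 (hiso y)
      · rw [Sym2.eq_iff] at h2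
        rcases h2 with ⟨h3, h4⟩ | ⟨h3, h4⟩ <;> simp_all
    have hwy : w ≠ y := by rw [hy]; exact Ne.symm hxw
    -- q is a nontrivial walk from y to w; its last edge enters w, and must be s(w, x)
    obtain ⟨z, h2, r, hr⟩ := Walk.exists_eq_cons_of_ne hwy q.reverse
    have hz : z = x := by
      rcases (hadj w z).mp h2 with h1 | h2'
      · exact absurd h1 (hiso z)
      · rw [Sym2.eq_iff] at h2'
        rcases h2' with ⟨h3, h4⟩ | ⟨h3, h4⟩ <;> simp_all
    have hmem : s(w, z) ∈ q.edges := by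
      rw [← List.mem_reverse, ← Walk.edges_reverse, hr]
      simp
    rw [hz.trans hy.symm] at hmem
    exact hc'.2 hmem
  · have hsub : ∀ e ∈ c.edges, e ∈ G₁.edgeSet := by
      intro e he
      induction e with
      | h a b =>
        have := c.edges_subset_edgeSet he
        rcases (hadj a b).mp this with h1 | h2
        · exact h1
        · rw [Sym2.eq_iff] at h2
          rcases h2 with ⟨rfl, rfl⟩ | ⟨rfl, rfl⟩
          · exact absurd (c.snd_mem_support_of_mem_edges he) hw
          · exact absurd (c.fst_mem_support_of_mem_edges he) hw
    exact hac (c.transfer G₁ hsub) (hc.transfer hsub)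

/-- The set of leaves of a subgraph, as a set of vertices of `V`. -/
def leafSet (H : G.Subgraph) : Set V := {v | v ∈ H.verts ∧ (H.neighborSet v).ncard = 1}

lemma leafCount_eq (H : G.Subgraph) : leafCount H = (leafSet H).ncard := by
  have h1 : ∀ v : H.verts, (H.coe.neighborSet v).ncard = (H.neighborSet ↑v).ncard := by
    intro v
    rw [← Nat.card_coe_set_eq, ← Nat.card_coe_set_eq]
    exact Nat.card_congr (Subgraph.coeNeighborSetEquiv v)
  have h2 : Subtype.val '' {v : H.verts | (H.coe.neighborSet v).ncard = 1} = leafSet H := by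
    ext z
    constructor
    · rintro ⟨v, hv, rfl⟩
      exact ⟨v.2, by rw [← h1 v]; exact hv⟩
    · rintro ⟨hz, h⟩
      exact ⟨⟨z, hz⟩, by rw [Set.mem_setOf_eq, h1 ⟨z, hz⟩]; exact h, rfl⟩
  rw [leafCount, ← h2, Set.ncard_image_of_injective _ Subtype.val_injective]

section Pendant

variable {H : G.Subgraph} {x w : V} (hxw : G.Adj x w) (hw : w ∉ H.verts)

lemma pendant_adj (a b : V) :
    (H ⊔ G.subgraphOfAdj hxw).Adj a b ↔ H.Adj a b ∨ s(a, b) = s(x, w) := by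
  rw [Subgraph.sup_adj, subgraphOfAdj_adj, eq_comm]

include hw

lemma pendant_nbhd_w : (H ⊔ G.subgraphOfAdj hxw).neighborSet w = {x} := by
  ext y
  simp only [Subgraph.mem_neighborSet, pendant_adj, Set.mem_singleton_iff, Sym2.eq_iff]
  constructor
  · rintro (h1 | h2)
    · exact absurd h1.fst_mem hw
    · rcases h2 with ⟨h3, h4⟩ | ⟨-, h4⟩
      · exact h4.trans h3
      · exact h4
  · rintro rfl
    right; right; exact ⟨trivial, rfl⟩

lemma pendant_nbhd_x : (H ⊔ G.subgraphOfAdj hxw).neighborSet x = insert w (H.neighborSet x) := by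
  ext y
  simp only [Subgraph.mem_neighborSet, pendant_adj, Set.mem_insert_iff, Sym2.eq_iff]
  constructor
  · rintro (h1 | h2)
    · exact Or.inr h1
    · rcases h2 with ⟨-, h4⟩ | ⟨h3, h4⟩
      · exact Or.inl h4
      · exact Or.inl (h4.trans h3)
  · rintro (rfl | h)
    · exact Or.inr (Or.inl ⟨trivial, rfl⟩)
    · exact Or.inl h

omit hw in
lemma pendant_nbhd_other {z : V} (hzx : z ≠ x) (hzw : z ≠ w) :
    (H ⊔ G.subgraphOfAdj hxw).neighborSet z = H.neighborSet z := by
  ext y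
  simp only [Subgraph.mem_neighborSet, pendant_adj]
  constructor
  · rintro (h1 | h2)
    · exact h1
    · rw [Sym2.eq_iff] at h2
      rcases h2 with ⟨h3, -⟩ | ⟨h3, -⟩
      · exact absurd h3 hzx
      · exact absurd h3 hzw
  · exact Or.inl

omit hw in
lemma pendant_verts : (H ⊔ G.subgraphOfAdj hxw).verts = H.verts ∪ {x, w} := rfl

lemma pendant_leafSet [Fintype V] (hx : H.neighborSet x ≠ ∅) :
    leafSet (H ⊔ G.subgraphOfAdj hxw) ⊆ insert w (leafSet H) := by
  rintro z ⟨hzv, hzn⟩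
  by_cases hzw : z = w
  · exact Or.inl hzw
  right
  by_cases hzx : z = x
  · subst hzx
    rw [pendant_nbhd_x hxw hw] at hzn
    have hwn : w ∉ H.neighborSet z := fun h => hw h.snd_mem
    rw [Set.ncard_insert_of_notMem hwn (Set.toFinite _)] at hzn
    have : (H.neighborSet z).ncard ≠ 0 := by
      rw [Ne, Set.ncard_eq_zero (Set.toFinite _)]
      exact hx
    omega
  · have hzv' : z ∈ H.verts := by
      rw [pendant_verts] at hzv
      rcases hzv with h | h
      · exact h
      · rcases h with h | h
        · exact absurd h hzx
        · exact absurd h hzw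
    rw [pendant_nbhd_other hxw hzx hzw] at hzn
    exact ⟨hzv', hzn⟩

end Pendant

lemma exists_extension [Fintype V] {H : G.Subgraph} {j : ℕ} (hj : 1 ≤ j)
    (hT : H.coe.IsTree) (hleaf : leafCount H ≤ j)
    {x w : V} (hxw : G.Adj x w) (hx : x ∈ H.verts) (hw : w ∉ H.verts) :
    ∃ K : G.Subgraph, IsEndedTree K (j + 1) ∧ K.verts.ncard = H.verts.ncard + 1 := by
  classical
  refine ⟨H ⊔ G.subgraphOfAdj hxw, ⟨⟨?_, ?_⟩, ?_⟩, ?_⟩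
  · -- connected
    exact (Subgraph.connected_sup (Subgraph.connected_iff'.mpr hT.isConnected).preconnected
      (Subgraph.subgraphOfAdj_connected hxw).preconnected ⟨x, hx, by simp⟩).coe
  · -- acyclic
    refine coe_acyclic_of_spanning (pendant_isAcyclic hxw.ne
      (spanning_acyclic_of_coe hT.IsAcyclic) (fun y hy => hw (H.edge_vert hy)) ?_)
    intro a b
    exact pendant_adj hxw a b
  · -- leaf count
    by_cases hx0 : H.neighborSet x = ∅
    · -- H is a single vertex
      have hone : ∀ y ∈ H.verts, y = x := by
        intro y hy
        by_contra hyx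
        have hr := hT.isConnected.preconnected ⟨x, hx⟩ ⟨y, hy⟩
        obtain ⟨pw⟩ := hr
        obtain ⟨z, hz, -, -⟩ := Walk.exists_eq_cons_of_ne
          (fun hh => hyx (congrArg Subtype.val hh).symm) pw
        exact absurd (show (z : V) ∈ H.neighborSet x from hz)
          (by rw [hx0]; exact Set.notMem_empty _)
      have hverts : (H ⊔ G.subgraphOfAdj hxw).verts = {x, w} := by
        rw [pendant_verts hxw]
        ext z
        constructor
        · rintro (hz | hz)
          · exact Or.inl (hone z hz)
          · exact hz
        · rintro (rfl | rfl)
          · exact Or.inl hx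
          · exact Or.inr (Or.inr rfl)
      have hsub : leafSet (H ⊔ G.subgraphOfAdj hxw) ⊆ {x, w} := by
        rintro z ⟨hz, -⟩
        rw [← hverts]; exact hz
      calc leafCount (H ⊔ G.subgraphOfAdj hxw) = (leafSet (H ⊔ G.subgraphOfAdj hxw)).ncard :=
            leafCount_eq _
        _ ≤ ({x, w} : Set V).ncard := Set.ncard_le_ncard hsub (Set.toFinite _)
        _ = 2 := Set.ncard_pair hxw.ne
        _ ≤ j + 1 := by omega
    · calc leafCount (H ⊔ G.subgraphOfAdj hxw) = (leafSet (H ⊔ G.subgraphOfAdj hxw)).ncard :=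
            leafCount_eq _
        _ ≤ (insert w (leafSet H)).ncard :=
            Set.ncard_le_ncard (pendant_leafSet hxw hw hx0) (Set.toFinite _)
        _ ≤ (leafSet H).ncard + 1 := Set.ncard_insert_le _ _
        _ = leafCount H + 1 := by rw [leafCount_eq]
        _ ≤ j + 1 := by omega
  · -- vertex count
    have hverts : (H ⊔ G.subgraphOfAdj hxw).verts = insert w H.verts := by
      rw [pendant_verts hxw]
      ext z
      constructor
      · rintro (hz | hz | hz)
        · exact Or.inr hz
        · exact Or.inr (hz ▸ hx)
        · exact Or.inl hz
      · rintro (rfl | hz)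
        · exact Or.inr (Or.inr rfl)
        · exact Or.inl hz
    rw [hverts, Set.ncard_insert_of_notMem hw (Set.toFinite _)]

lemma toSubgraph_cons_eq {u y v : V} (h : G.Adj u y) (q : G.Walk y v) :
    (Walk.cons h q).toSubgraph = q.toSubgraph ⊔ G.subgraphOfAdj h.symm := by
  rw [subgraphOfAdj_symm]
  exact sup_comm _ _

lemma toSubgraph_spanning_acyclic {u v : V} (p : G.Walk u v) :
    p.IsPath → p.toSubgraph.spanningCoe.IsAcyclic := by
  induction p with
  | nil =>
    intro _
    have hb : (G.singletonSubgraph u).spanningCoe = ⊥ := by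
      ext a b
      simp [SimpleGraph.singletonSubgraph]
    exact hb ▸ isAcyclic_bot
  | @cons u y v h q ih =>
    intro hp
    rw [toSubgraph_cons_eq]
    refine pendant_isAcyclic h.ne' (ih hp.of_cons) ?_ ?_
    · intro z hz
      refine ((Walk.cons_isPath_iff _ _).mp hp).2 ?_
      have hmem : u ∈ q.toSubgraph.verts := q.toSubgraph.edge_vert hz
      rwa [Walk.mem_verts_toSubgraph] at hmem
    · intro a b
      exact pendant_adj h.symm a b

lemma toSubgraph_leafSet [Fintype V] {u v : V} (p : G.Walk u v) :
    p.IsPath → leafSet p.toSubgraph ⊆ {u, v} := by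
  induction p with
  | nil =>
    intro _
    rintro z ⟨hz, -⟩
    exact Or.inl hz
  | @cons u y v h q ih =>
    intro hp
    rintro z hzmem
    rw [toSubgraph_cons_eq] at hzmem
    obtain ⟨hzv, hzn⟩ := hzmem
    have hu : u ∉ q.toSubgraph.verts := by
      rw [Walk.verts_toSubgraph]
      exact ((Walk.cons_isPath_iff _ _).mp hp).2
    by_cases hzu : z = u
    · exact Or.inl hzu
    by_cases hzy : z = y
    · cases q with
      | nil => exact Or.inr hzy
      | @cons _ y2 _ h' q' =>
        exfalso
        rw [hzy, pendant_nbhd_x h.symm hu] at hzn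
        have hun : u ∉ (Walk.cons h' q').toSubgraph.neighborSet y := fun hh =>
          hu ((Walk.cons h' q').toSubgraph.edge_vert (Subgraph.adj_symm _ hh))
        rw [Set.ncard_insert_of_notMem hun (Set.toFinite _)] at hzn
        have hne : ((Walk.cons h' q').toSubgraph.neighborSet y).Nonempty :=
          ⟨y2, Subgraph.sup_adj.mpr (Or.inl (by rw [subgraphOfAdj_adj]))⟩
        have := (Set.ncard_pos (Set.toFinite _)).mpr hne
        omega
    · have hzv' : z ∈ q.toSubgraph.verts := by
        rw [pendant_verts h.symm] at hzv
        rcases hzv with hz | hz | hz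
        · exact hz
        · exact absurd hz hzy
        · exact absurd hz hzu
      rw [pendant_nbhd_other h.symm hzy hzu] at hzn
      rcases ih hp.of_cons ⟨hzv', hzn⟩ with hz | hz
      · exact absurd hz hzy
      · exact Or.inr hz

lemma toSubgraph_isEndedTree [Fintype V] {u v : V} (p : G.Walk u v) (hp : p.IsPath) :
    IsEndedTree p.toSubgraph 2 ∧ p.toSubgraph.verts.ncard = p.support.length := by
  classical
  refine ⟨⟨⟨p.toSubgraph_connected.coe,
    coe_acyclic_of_spanning (toSubgraph_spanning_acyclic p hp)⟩, ?_⟩, ?_⟩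
  · calc leafCount p.toSubgraph = (leafSet p.toSubgraph).ncard := leafCount_eq _
      _ ≤ ({u, v} : Set V).ncard := Set.ncard_le_ncard (toSubgraph_leafSet p hp) (Set.toFinite _)
      _ ≤ 2 := by
        refine (Set.ncard_insert_le u ({v} : Set V)).trans ?_
        simp
  · rw [Walk.verts_toSubgraph]
    have hset : {w | w ∈ p.support} = ↑p.support.toFinset := by ext z; simp
    rw [hset, Set.ncard_coe_finset, List.toFinset_card_of_nodup hp.support_nodup]

end SpanTreeAux


open SpanTreeAux in
/-- If `k ≥ 2` and the connected graph `G` has no spanning tree with at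
most `k` leaves, then `t_{k+1} ≥ t₂ + k - 1`, where `t₂` is the order of a longest path. -/
theorem treeOrd_succ_ge_of_no_spanning_tree {V : Type*} [Fintype V] (k : ℕ) (hk : 2 ≤ k)
    (G : SimpleGraph V) (hconn : G.Connected)
    (hno : ¬ ∃ H : G.Subgraph, H.IsSpanning ∧ IsEndedTree H k) :
    pathOrd G + k - 1 ≤ treeOrd G (k + 1) := by
  classical
  obtain ⟨v₀⟩ := hconn.nonempty
  have hbdd : ∀ j : ℕ, BddAbove {m | ∃ H : G.Subgraph, IsEndedTree H j ∧ H.verts.ncard = m} := by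
    intro j
    refine ⟨Fintype.card V, ?_⟩
    rintro m ⟨H, -, rfl⟩
    calc H.verts.ncard ≤ (Set.univ : Set V).ncard :=
          Set.ncard_le_ncard (Set.subset_univ _) (Set.toFinite _)
      _ = Fintype.card V := by rw [Set.ncard_univ, Nat.card_eq_fintype_card]
  have hne : ∀ j : ℕ, {m | ∃ H : G.Subgraph, IsEndedTree H j ∧ H.verts.ncard = m}.Nonempty := by
    intro j
    have hb : (G.singletonSubgraph v₀).spanningCoe = ⊥ := by
      ext a b
      simp [SimpleGraph.singletonSubgraph]
    have hls : SpanTreeAux.leafSet (G.singletonSubgraph v₀) = ∅ := by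
      ext z
      simp [SpanTreeAux.leafSet, Subgraph.neighborSet, SimpleGraph.singletonSubgraph]
    refine ⟨1, G.singletonSubgraph v₀,
      ⟨⟨Subgraph.singletonSubgraph_connected.coe,
        SpanTreeAux.coe_acyclic_of_spanning (hb ▸ isAcyclic_bot)⟩, ?_⟩, ?_⟩
    · rw [SpanTreeAux.leafCount_eq, hls]
      simp
    · simp [SimpleGraph.singletonSubgraph]
  have hp2 : pathOrd G ≤ treeOrd G 2 := by
    refine csSup_le ⟨1, v₀, v₀, Walk.nil, Walk.IsPath.nil, by simp⟩ ?_
    rintro m ⟨u, v, p, hp, rfl⟩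
    obtain ⟨hT, hcard⟩ := SpanTreeAux.toSubgraph_isEndedTree p hp
    exact le_csSup (hbdd 2) ⟨p.toSubgraph, hT, hcard⟩
  have hstep : ∀ j : ℕ, 1 ≤ j → j ≤ k → treeOrd G j + 1 ≤ treeOrd G (j + 1) := by
    intro j hj1 hjk
    have hmem : treeOrd G j ∈ {m | ∃ H : G.Subgraph, IsEndedTree H j ∧ H.verts.ncard = m} :=
      Nat.sSup_mem (hne j) (hbdd j)
    obtain ⟨H, ⟨hT, hleaf⟩, hcard⟩ := hmem
    have hnsp : ¬ H.IsSpanning := fun hsp => hno ⟨H, hsp, hT, hleaf.trans hjk⟩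
    obtain ⟨w, hw⟩ := not_forall.mp hnsp
    obtain ⟨⟨u0, hu0⟩⟩ := hT.isConnected.nonempty
    obtain ⟨pw⟩ := hconn.preconnected u0 w
    obtain ⟨d, -, hd1, hd2⟩ := pw.exists_boundary_dart H.verts hu0 hw
    obtain ⟨K, hK, hKcard⟩ := SpanTreeAux.exists_extension hj1 hT hleaf d.adj hd1 hd2
    calc treeOrd G j + 1 = H.verts.ncard + 1 := by rw [hcard]
      _ = K.verts.ncard := hKcard.symm
      _ ≤ treeOrd G (j + 1) := le_csSup (hbdd (j + 1)) ⟨K, hK, rfl⟩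
  have hiter : ∀ i : ℕ, 2 + i ≤ k + 1 → treeOrd G 2 + i ≤ treeOrd G (2 + i) := by
    intro i
    induction i with
    | zero => intro _; simp
    | succ n ihn =>
      intro hle
      have h1 := ihn (by omega)
      have h2 := hstep (2 + n) (by omega) (by omega)
      have h3 : 2 + n + 1 = 2 + (n + 1) := by omega
      rw [h3] at h2
      omega
  have hfin := hiter (k - 1) (by omega)
  have hk1 : 2 + (k - 1) = k + 1 := by omega
  rw [hk1] at hfin
  omega
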